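/- arXiv:1908.10096 — 4 statements merged into one kernel-verified Lean document; each statement's English description precedes it below -/
import Mathlib

section
/- For all positive reals y and z, (y - z)(log y - log z) ≥ (1/4)(√y - √z)². -/
lemma aux_log_ge (y z : ℝ) (hy : 0 < y) (hz : 0 < z) (hzy : z ≤ y) :
    (y - z) * (Real.log y - Real.log z) ≥ (1 / 4) * (Real.sqrt y - Real.sqrt z) ^ 2 := by
  have h1 : Real.log (z / y) ≤ z / y - 1 := Real.log_le_sub_one_of_pos (by positivity)
  rw [Real.log_div (ne_of_gt hz) (ne_of_gt hy)] at h1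
  have hlog : Real.log y - Real.log z ≥ (y - z) / y := by
    have : z / y - 1 = -((y - z) / y) := by field_simp; ring
    linarith [h1, this ▸ h1]
  have h2 : (y - z) * (Real.log y - Real.log z) ≥ (y - z) ^ 2 / y := by
    have hyz : 0 ≤ y - z := by linarith
    have := mul_le_mul_of_nonneg_left hlog hyz
    calc (y - z) * (Real.log y - Real.log z) ≥ (y - z) * ((y - z) / y) := this
      _ = (y - z) ^ 2 / y := by ring
  have ha : Real.sqrt y ^ 2 = y := Real.sq_sqrt hy.le
  have hb : Real.sqrt z ^ 2 = z := Real.sq_sqrt hz.le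
  have hapos : 0 < Real.sqrt y := Real.sqrt_pos.mpr hy
  have hbnn : 0 ≤ Real.sqrt z := Real.sqrt_nonneg z
  have h3 : (y - z) ^ 2 / y ≥ (1 / 4) * (Real.sqrt y - Real.sqrt z) ^ 2 := by
    rw [ge_iff_le, le_div_iff₀ hy]
    nlinarith [mul_nonneg hapos.le hbnn, sq_nonneg ((Real.sqrt y - Real.sqrt z) * Real.sqrt z),
      sq_nonneg (Real.sqrt y - Real.sqrt z)]
  linarith

theorem log_diff_ge_quarter_sqrt_sq (y z : ℝ) (hy : 0 < y) (hz : 0 < z) :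
    (y - z) * (Real.log y - Real.log z) ≥ (1 / 4) * (Real.sqrt y - Real.sqrt z) ^ 2 := by
  rcases le_total z y with h | h
  · exact aux_log_ge y z hy hz h
  · have := aux_log_ge z y hz hy h
    have e1 : (z - y) * (Real.log z - Real.log y) = (y - z) * (Real.log y - Real.log z) := by ring
    have e2 : (Real.sqrt z - Real.sqrt y) ^ 2 = (Real.sqrt y - Real.sqrt z) ^ 2 := by ring
    rw [e1, e2] at this
    exact this
end

section
/- For all positive reals y and z, y·log(y/z) - y + z ≥ (y - z)²/(2·max{y, z}). -/
open Real Set in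
lemma aux_A : ∀ x ∈ Set.Ici (1:ℝ), 0 ≤ x * Real.log x - x + 1 - (x - 2 + x⁻¹)/2 := by
  set f : ℝ → ℝ := fun x => x * Real.log x - x + 1 - (x - 2 + x⁻¹)/2 with hf
  have key : MonotoneOn f (Set.Ici (1:ℝ)) := by
    apply monotoneOn_of_deriv_nonneg (convex_Ici 1)
    · apply ContinuousOn.sub
      · exact (continuousOn_id.mul (Real.continuousOn_log.mono (by
          intro x hx; simp at hx ⊢; linarith))).sub continuousOn_id |>.add continuousOn_const
      · exact ((continuousOn_id.sub continuousOn_const).add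
          (continuousOn_inv₀.mono (by intro x hx; simp at hx ⊢; linarith))).div_const 2
    · intro x hx
      rw [interior_Ici] at hx
      have hx0 : (0:ℝ) < x := lt_trans one_pos hx
      have h1 : HasDerivAt f (Real.log x + 1 - 1 - (1 - x⁻¹ * x⁻¹)/2) x := by
        have hlog : HasDerivAt (fun x : ℝ => x * Real.log x) (Real.log x + 1) x := by
          have := (hasDerivAt_id x).mul (Real.hasDerivAt_log (ne_of_gt hx0))
          refine this.congr_deriv ?_
          simp [hx0.ne']
        have hinv : HasDerivAt (fun x : ℝ => x⁻¹) (-(x⁻¹ * x⁻¹)) x := by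
          have := hasDerivAt_inv (ne_of_gt hx0)
          refine this.congr_deriv ?_
          rw [sq, mul_inv]
        have := (((hlog.sub (hasDerivAt_id x)).add_const 1).sub
          ((((hasDerivAt_id x).sub_const 2).add hinv).div_const 2))
        exact this.congr_deriv (by ring)
      exact h1.differentiableAt.differentiableWithinAt
    · intro x hx
      rw [interior_Ici] at hx
      have hx0 : (0:ℝ) < x := lt_trans one_pos hx
      have h1 : HasDerivAt f (Real.log x + 1 - 1 - (1 - x⁻¹ * x⁻¹)/2) x := by
        have hlog : HasDerivAt (fun x : ℝ => x * Real.log x) (Real.log x + 1) x := by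
          have := (hasDerivAt_id x).mul (Real.hasDerivAt_log (ne_of_gt hx0))
          refine this.congr_deriv ?_
          simp [hx0.ne']
        have hinv : HasDerivAt (fun x : ℝ => x⁻¹) (-(x⁻¹ * x⁻¹)) x := by
          have := hasDerivAt_inv (ne_of_gt hx0)
          refine this.congr_deriv ?_
          rw [sq, mul_inv]
        have := (((hlog.sub (hasDerivAt_id x)).add_const 1).sub
          ((((hasDerivAt_id x).sub_const 2).add hinv).div_const 2))
        exact this.congr_deriv (by ring)
      rw [h1.deriv]
      have hlb : 1 - x⁻¹ ≤ Real.log x := Real.one_sub_inv_le_log_of_pos hx0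
      nlinarith [sq_nonneg (1 - x⁻¹)]
  intro x hx
  have h1 : f 1 ≤ f x := key (by simp) hx hx
  have h0 : f 1 = 0 := by norm_num [hf]
  rw [h0] at h1
  exact h1

theorem rel_entropy_lower_bound (y z : ℝ) (hy : 0 < y) (hz : 0 < z) :
    y * Real.log (y / z) - y + z ≥ (y - z) ^ 2 / (2 * max y z) := by
  rcases le_total z y with hzy | hzy
  · rw [max_eq_left hzy]
    have hx1 : (1:ℝ) ≤ y / z := (one_le_div hz).mpr hzy
    have hA := aux_A (y / z) hx1
    have hinv : (y / z)⁻¹ = z / y := by field_simp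
    rw [hinv] at hA
    rw [ge_iff_le, div_le_iff₀ (by positivity)]
    have hkey : (y/z * Real.log (y/z) - y/z + 1 - (y/z - 2 + z/y)/2) * (y*z)
        = y^2 * Real.log (y/z) - y^2 + y*z - (y-z)^2/2 := by
      field_simp
      ring
    have hA' : 0 ≤ y^2 * Real.log (y/z) - y^2 + y*z - (y-z)^2/2 := by
      rw [← hkey]
      exact mul_nonneg hA (mul_pos hy hz).le
    nlinarith [hA']
  · rw [max_eq_right hzy]
    -- log (z/y) ≤ (z/y - y/z)/2 via sinh
    have hu1 : (1:ℝ) ≤ z / y := (one_le_div hy).mpr hzy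
    have hlogu : 0 ≤ Real.log (z / y) := Real.log_nonneg hu1
    have hsinh : Real.log (z / y) ≤ Real.sinh (Real.log (z / y)) := by
      rcases eq_or_lt_of_le hlogu with h | h
      · simp [← h]
      · exact le_of_lt (Real.self_lt_sinh_iff.mpr h)
    rw [Real.sinh_eq, Real.exp_log (by positivity), Real.exp_neg,
      Real.exp_log (by positivity)] at hsinh
    have hinv : (z / y)⁻¹ = y / z := by field_simp
    rw [hinv] at hsinh
    have hlogyz : Real.log (y / z) = - Real.log (z / y) := by
      rw [← Real.log_inv, hinv]
    rw [hlogyz, ge_iff_le, div_le_iff₀ (by positivity)]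
    have h2 : y * Real.log (z / y) ≤ y * ((z / y - y / z) / 2) :=
      mul_le_mul_of_nonneg_left hsinh hy.le
    have h3 : y * ((z / y - y / z) / 2) = (z * z - y * y) / (2 * z) := by
      field_simp
    rw [h3] at h2
    have h4 : (z * z - y * y) / (2 * z) * (2 * z) = z * z - y * y := by
      field_simp
    nlinarith [mul_le_mul_of_nonneg_right h2 (by positivity : (0:ℝ) ≤ 2 * z)]
end

section
/- For all positive reals y and z, y·log(y/z) - y + z ≤ (y - z)²/(2·min{y, z}). -/
private lemma relent_aux_A (t : ℝ) (ht : 1 ≤ t) :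
    t * Real.log t + 1 - t ≤ (t - 1)^2 / 2 := by
  have h0 : (0:ℝ) < t := by linarith
  have hs : Real.log t ≤ Real.sinh (Real.log t) := by
    rcases eq_or_lt_of_le (Real.log_nonneg ht) with h | h
    · rw [← h]; simp
    · exact (Real.self_lt_sinh_iff.mpr h).le
  rw [Real.sinh_log h0] at hs
  have h2 := mul_le_mul_of_nonneg_left hs h0.le
  have h3 : t * t⁻¹ = 1 := mul_inv_cancel₀ (ne_of_gt h0)
  nlinarith [h2, h3]

private lemma relent_aux_B (s : ℝ) (hs : 1 ≤ s) :
    s - 1 - Real.log s ≤ (s - 1)^2 / 2 := by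
  set f : ℝ → ℝ := fun x => (x - 1)^2 / 2 - (x - 1 - Real.log x) with hf
  have key : MonotoneOn f (Set.Ici 1) := by
    have hint : interior (Set.Ici (1:ℝ)) = Set.Ioi 1 := interior_Ici
    apply monotoneOn_of_deriv_nonneg (convex_Ici 1)
    · apply ContinuousOn.sub
      · fun_prop
      · apply ContinuousOn.sub (by fun_prop)
        exact Real.continuousOn_log.mono (fun x hx => by
          simp only [Set.mem_compl_iff, Set.mem_singleton_iff]
          intro h; rw [h] at hx; simp at hx; linarith)
    · rw [hint]
      intro x hx
      have hx0 : (0:ℝ) < x := lt_trans one_pos hx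
      apply DifferentiableAt.differentiableWithinAt
      apply DifferentiableAt.sub (by fun_prop)
      exact (differentiableAt_id.sub_const 1).sub (Real.differentiableAt_log (ne_of_gt hx0))
    · rw [hint]
      intro x hx
      have hx1 : 1 < x := hx
      have hx0 : (0:ℝ) < x := lt_trans one_pos hx
      have hd : HasDerivAt f ((x - 1) - (1 - x⁻¹)) x := by
        have h1 : HasDerivAt (fun x : ℝ => (x - 1)^2 / 2) (x - 1) x := by
          have := ((hasDerivAt_id x).sub_const 1).pow 2
          simpa using this.div_const 2
        have h2 : HasDerivAt (fun x : ℝ => x - 1 - Real.log x) (1 - x⁻¹) x :=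
          ((hasDerivAt_id x).sub_const 1).sub (Real.hasDerivAt_log (ne_of_gt hx0))
        exact h1.sub h2
      rw [hd.deriv]
      have hxi : x * x⁻¹ = 1 := mul_inv_cancel₀ (ne_of_gt hx0)
      nlinarith [sq_nonneg (x - 1), hx0]
  have h1 : f 1 ≤ f s := key (by simp) (by exact hs) hs
  have : f 1 = 0 := by simp [hf]
  rw [this] at h1
  simp only [hf] at h1
  linarith

theorem rel_entropy_upper_bound (y z : ℝ) (hy : 0 < y) (hz : 0 < z) :
    y * Real.log (y / z) - y + z ≤ (y - z) ^ 2 / (2 * min y z) := by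
  rcases le_total z y with h | h
  · -- min = z, use lemma A with t = y / z
    rw [min_eq_right h]
    have ht : 1 ≤ y / z := (one_le_div hz).mpr h
    have hA := relent_aux_A (y / z) ht
    field_simp at hA
    rw [le_div_iff₀ (by positivity), ← mul_le_mul_iff_of_pos_right hz]
    nlinarith [hA]
  · -- min = y, use lemma B with s = z / y
    rw [min_eq_left h]
    have hs : 1 ≤ z / y := (one_le_div hy).mpr h
    have hB := relent_aux_B (z / y) hs
    have hlog : Real.log (y / z) = - Real.log (z / y) := by
      rw [← Real.log_inv]
      congr 1
      field_simp
    rw [hlog]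
    field_simp at hB
    rw [le_div_iff₀ (by positivity), ← mul_le_mul_iff_of_pos_right hy]
    nlinarith [hB]
end

section
/- The 4×4 matrix D/(1-p²) · [[1, -p μ⃗ᵀ],[-p μ⃗, η I + (1-η) μ⃗⊗μ⃗]], where η = √(1-p²), D > 0, p ∈ [0,1), and μ⃗ ∈ ℝ³ is a unit vector, is symmetric positive definite. -/
open Matrix

private lemma quad_pos (p η a v0 v1 v2 m0 m1 m2 : ℝ) (hp0 : 0 ≤ p) (hp1 : p < 1)
    (hη : 0 < η) (hη2 : η ^ 2 = 1 - p ^ 2) (hη1 : η ≤ 1)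
    (hμ : m0 ^ 2 + m1 ^ 2 + m2 ^ 2 = 1)
    (hne : ¬(a = 0 ∧ v0 = 0 ∧ v1 = 0 ∧ v2 = 0)) :
    0 < a ^ 2 - 2 * p * a * (m0 * v0 + m1 * v1 + m2 * v2)
      + η * (v0 ^ 2 + v1 ^ 2 + v2 ^ 2) + (1 - η) * (m0 * v0 + m1 * v1 + m2 * v2) ^ 2 := by
  set s : ℝ := m0 * v0 + m1 * v1 + m2 * v2 with hs
  have hLag : v0 ^ 2 + v1 ^ 2 + v2 ^ 2 - s ^ 2 =
      (m0 * v1 - m1 * v0) ^ 2 + (m0 * v2 - m2 * v0) ^ 2 + (m1 * v2 - m2 * v1) ^ 2 := by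
    rw [hs]; linear_combination (-(v0 ^ 2 + v1 ^ 2 + v2 ^ 2)) * hμ
  have hCS : s ^ 2 ≤ v0 ^ 2 + v1 ^ 2 + v2 ^ 2 := by
    nlinarith [sq_nonneg (m0 * v1 - m1 * v0), sq_nonneg (m0 * v2 - m2 * v0),
      sq_nonneg (m1 * v2 - m2 * v1)]
  by_cases hv : v0 = 0 ∧ v1 = 0 ∧ v2 = 0
  · obtain ⟨h0, h1', h2⟩ := hv
    have hane : a ≠ 0 := fun h => hne ⟨h, h0, h1', h2⟩
    have hs0 : s = 0 := by rw [hs, h0, h1', h2]; ring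
    rw [hs0, h0, h1', h2]
    nlinarith [sq_pos_of_ne_zero hane]
  · have hvpos : 0 < v0 ^ 2 + v1 ^ 2 + v2 ^ 2 := by
      rcases not_and_or.mp hv with h | h
      · nlinarith [sq_nonneg v1, sq_nonneg v2, sq_pos_of_ne_zero h]
      rcases not_and_or.mp h with h | h
      · nlinarith [sq_nonneg v0, sq_nonneg v2, sq_pos_of_ne_zero h]
      · nlinarith [sq_nonneg v0, sq_nonneg v1, sq_pos_of_ne_zero h]
    by_cases hs0 : s = 0
    · rw [hs0]; nlinarith [sq_nonneg a, mul_pos hη hvpos]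
    · nlinarith [sq_nonneg (a - p * s), mul_pos (mul_pos hη hη) (sq_pos_of_ne_zero hs0),
        mul_le_mul_of_nonneg_left hCS hη.le]

theorem diffusion_matrix_posdef (D p : ℝ) (hD : 0 < D) (hp0 : 0 ≤ p) (hp1 : p < 1)
    (μ : Fin 3 → ℝ) (hμ : (μ 0) ^ 2 + (μ 1) ^ 2 + (μ 2) ^ 2 = 1) :
    let η : ℝ := Real.sqrt (1 - p ^ 2)
    let M : Matrix (Fin 1 ⊕ Fin 3) (Fin 1 ⊕ Fin 3) ℝ :=
      (D / (1 - p ^ 2)) •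
        Matrix.fromBlocks 1 (Matrix.of fun _ j => -p * μ j)
          (Matrix.of fun i _ => -p * μ i)
          (η • (1 : Matrix (Fin 3) (Fin 3) ℝ) + (1 - η) • Matrix.vecMulVec μ μ)
    M.IsSymm ∧ M.PosDef := by
  intro η M
  have h1 : 0 < 1 - p ^ 2 := by nlinarith
  have hη : 0 < η := Real.sqrt_pos.mpr h1
  have hη2 : η ^ 2 = 1 - p ^ 2 := Real.sq_sqrt h1.le
  have hη1 : η ≤ 1 := by nlinarith [sq_nonneg p]
  have hc : 0 < D / (1 - p ^ 2) := div_pos hD h1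
  have hsymm : M.IsSymm := by
    ext i j
    rcases i with i | i <;> rcases j with j | j <;>
      simp [M, Matrix.IsSymm, fromBlocks, transpose_apply, Matrix.one_apply, vecMulVec,
        Matrix.smul_apply, mul_comm, eq_comm]
  refine ⟨hsymm, posDef_iff_dotProduct_mulVec.mpr ⟨?_, ?_⟩⟩
  · rw [Matrix.IsHermitian, conjTranspose_eq_transpose_of_trivial]; exact hsymm
  · intro x hx
    have hne : ¬(x (Sum.inl 0) = 0 ∧ x (Sum.inr 0) = 0 ∧ x (Sum.inr 1) = 0 ∧
        x (Sum.inr 2) = 0) := by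
      rintro ⟨h0, h1', h2, h3⟩
      apply hx
      funext i
      rcases i with i | i
      · fin_cases i; exact h0
      · fin_cases i <;> assumption
    have key := quad_pos p η (x (Sum.inl 0)) (x (Sum.inr 0)) (x (Sum.inr 1)) (x (Sum.inr 2))
      (μ 0) (μ 1) (μ 2) hp0 hp1 hη hη2 hη1 hμ hne
    simp only [M, star_trivial, Matrix.mulVec, dotProduct, Fintype.sum_sum_type,
      Fin.sum_univ_three, Fin.sum_univ_one, smul_eq_mul, fromBlocks, Matrix.smul_apply,
      Matrix.add_apply, Matrix.one_apply, vecMulVec_apply, Sum.elim_inl, Sum.elim_inr, of_apply]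
    norm_num [Fin.ext_iff]
    exact lt_of_lt_of_eq (mul_pos hc key) (by ring)
end
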